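/- Let α ∈ ℝ with α not a multiple of π/2, and let u(t) = ∑_{j=1}^N c_j γ(t − t_j) and v(t) = ∑_{j=1}^M κ_j γ(t − τ_j), where γ(t) = e^{−πt²}, the t_j are pairwise distinct reals, the τ_j are pairwise distinct reals, and c_j, κ_j are nonzero complex numbers. If |F_α v| = |F_α u| on ℝ, then M = N and (after reordering) τ_j = t_j and there is c ∈ ℂ with |c| = 1 such that κ_j = c·c_j for all j; in particular v = c·u. -/

import Mathlib

open MeasureTheory

/-- The ambiguity function of `u`:
`A(u)(x,y) = ∫ u(t + x/2) conj (u(t - x/2)) e^{-2iπ t y} dt`. -/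
noncomputable def amb (u : ℝ → ℂ) (x y : ℝ) : ℂ :=
  ∫ t : ℝ, u (t + x / 2) * (starRingEnd ℂ) (u (t - x / 2)) *
    Complex.exp (-2 * (Real.pi : ℂ) * Complex.I * (t : ℂ) * (y : ℂ))

/-- The fractional Fourier transform of order `α`.  For `sin α ≠ 0` it is given by
`F_α u(ξ) = c_α e^{-iπ ξ² cot α} ∫ u(t) e^{-iπ t² cot α} e^{-2iπ t ξ / sin α} dt`
with `c_α = e^{i(α - π/2)/2} / √|sin α|`; for `α ∈ πℤ` it is `u(± ξ) = u(cos α · ξ)`. -/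
noncomputable def frft (α : ℝ) (u : ℝ → ℂ) : ℝ → ℂ :=
  if Real.sin α = 0 then fun ξ => u (Real.cos α * ξ)
  else fun ξ =>
    (Complex.exp (Complex.I * ((α : ℂ) - (Real.pi : ℂ) / 2) / 2) /
        (Real.sqrt |Real.sin α| : ℂ)) *
      Complex.exp (-(Real.pi : ℂ) * Complex.I * (ξ : ℂ) ^ 2 *
        ((Real.cos α / Real.sin α : ℝ) : ℂ)) *
      ∫ t : ℝ, u t *
        Complex.exp (-(Real.pi : ℂ) * Complex.I * (t : ℂ) ^ 2 *
          ((Real.cos α / Real.sin α : ℝ) : ℂ)) *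
        Complex.exp (-2 * (Real.pi : ℂ) * Complex.I * (t : ℂ) * (ξ : ℂ) /
          ((Real.sin α : ℝ) : ℂ))


open Complex Finset


/-- shifting a vanishing exponential sum: multiply coefficients by the exponents. -/
lemma expsum_deriv_step {n : ℕ} (lam : Fin n → ℂ) (g : Fin n → ℂ)
    (hg : ∀ ξ : ℝ, ∑ i, g i * Complex.exp (lam i * ξ) = 0) :
    ∀ ξ : ℝ, ∑ i, g i * lam i * Complex.exp (lam i * ξ) = 0 := by
  intro ξ
  have hder : HasDerivAt (fun ξ : ℝ => ∑ i, g i * Complex.exp (lam i * ξ))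
      (∑ i, g i * lam i * Complex.exp (lam i * ξ)) ξ := by
    refine HasDerivAt.fun_sum fun i _ => ?_
    have h1 : HasDerivAt (fun ξ : ℝ => (ξ : ℂ)) 1 ξ := by
      simpa using (hasDerivAt_id ξ).ofReal_comp
    have h2 : HasDerivAt (fun ξ : ℝ => lam i * (ξ : ℂ)) (lam i) ξ := by
      simpa using h1.const_mul (lam i)
    have h3 := h2.cexp.const_mul (g i)
    exact h3.congr_deriv (by ring)
  have hzero : (fun ξ : ℝ => ∑ i, g i * Complex.exp (lam i * ξ)) = fun _ => (0 : ℂ) :=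
    funext hg
  rw [hzero] at hder
  have := hder.unique (hasDerivAt_const ξ (0 : ℂ))
  exact this

lemma expsum_eq_zero {n : ℕ} (lam : Fin n → ℂ) (hlam : Function.Injective lam)
    (a : Fin n → ℂ) (h : ∀ ξ : ℝ, ∑ i, a i * Complex.exp (lam i * ξ) = 0) :
    ∀ i, a i = 0 := by
  have key : ∀ m : ℕ, ∀ ξ : ℝ, ∑ i, a i * lam i ^ m * Complex.exp (lam i * ξ) = 0 := by
    intro m
    induction m with
    | zero => simpa using h
    | succ m ih =>
      have := expsum_deriv_step lam (fun i => a i * lam i ^ m) ih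
      intro ξ
      have h2 := this ξ
      calc ∑ i, a i * lam i ^ (m + 1) * Complex.exp (lam i * ξ)
          = ∑ i, a i * lam i ^ m * lam i * Complex.exp (lam i * ξ) := by
            refine Finset.sum_congr rfl fun i _ => ?_; ring
        _ = 0 := h2
  have key0 : ∀ m : ℕ, ∑ i, lam i ^ m * a i = 0 := by
    intro m
    have := key m 0
    simpa [mul_comm] using this
  have hv : (Matrix.vandermonde lam).transpose.mulVec a = 0 := by
    funext m
    simpa [Matrix.mulVec, Matrix.vandermonde, dotProduct, Matrix.transpose]
      using key0 m
  have hdet : (Matrix.vandermonde lam).transpose.det ≠ 0 := by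
    rw [Matrix.det_transpose]
    exact Matrix.det_vandermonde_ne_zero_iff.mpr hlam
  have := Matrix.eq_zero_of_mulVec_eq_zero hdet hv
  intro i; exact congrFun this i

lemma expsum_finset_eq_zero (T : Finset ℂ) (a : ℂ → ℂ)
    (h : ∀ ξ : ℝ, ∑ μ ∈ T, a μ * Complex.exp (μ * ξ) = 0) :
    ∀ μ ∈ T, a μ = 0 := by
  classical
  set n := T.card with hn
  let eqv : Fin n ≃ {x // x ∈ T} := T.equivFin.symm
  set lam : Fin n → ℂ := fun i => (eqv i : ℂ) with hlamdef
  have hlam : Function.Injective lam := by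
    intro i j hij
    exact eqv.injective (Subtype.ext hij)
  have hsum : ∀ ξ : ℝ, ∑ i, a (lam i) * Complex.exp (lam i * ξ) = 0 := by
    intro ξ
    rw [Equiv.sum_comp eqv (fun x : {x // x ∈ T} => a (x : ℂ) * Complex.exp ((x : ℂ) * ξ)),
      Finset.sum_coe_sort T (fun μ => a μ * Complex.exp (μ * ξ))]
    exact h ξ
  have hzero := expsum_eq_zero lam hlam (fun i => a (lam i)) hsum
  intro μ hμ
  have : ∃ i, lam i = μ := ⟨eqv.symm ⟨μ, hμ⟩, by simp [hlamdef]⟩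
  obtain ⟨i, hi⟩ := this
  rw [← hi]; exact hzero i



lemma expsum_match {P Q : Type*} [Fintype P] [Fintype Q] [DecidableEq P] [DecidableEq Q]
    (f : P → ℂ) (g : Q → ℂ) (B : P → ℂ) (A : Q → ℂ)
    (h : ∀ ξ : ℝ, ∑ p, B p * Complex.exp (f p * ξ) = ∑ q, A q * Complex.exp (g q * ξ)) :
    ∀ μ : ℂ, ∑ p ∈ univ.filter (fun p => f p = μ), B p
           = ∑ q ∈ univ.filter (fun q => g q = μ), A q := by
  classical
  intro μ₀
  set T : Finset ℂ := (univ.image f) ∪ (univ.image g) with hT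
  set a : ℂ → ℂ := fun μ => (∑ p ∈ univ.filter (fun p => f p = μ), B p)
      - (∑ q ∈ univ.filter (fun q => g q = μ), A q) with ha
  have key : ∀ μ ∈ T, a μ = 0 := by
    refine expsum_finset_eq_zero T a ?_
    intro ξ
    have e1 : ∑ μ ∈ T, (∑ p ∈ univ.filter (fun p => f p = μ), B p) * Complex.exp (μ * ξ)
        = ∑ p, B p * Complex.exp (f p * ξ) := by
      rw [← Finset.sum_fiberwise_of_maps_to (fun p _ =>
        Finset.mem_union_left _ (Finset.mem_image_of_mem f (Finset.mem_univ p)))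
        (fun p => B p * Complex.exp (f p * ξ))]
      refine Finset.sum_congr rfl fun μ _ => ?_
      rw [Finset.sum_mul]
      refine Finset.sum_congr rfl fun p hp => ?_
      rw [(Finset.mem_filter.mp hp).2]
    have e2 : ∑ μ ∈ T, (∑ q ∈ univ.filter (fun q => g q = μ), A q) * Complex.exp (μ * ξ)
        = ∑ q, A q * Complex.exp (g q * ξ) := by
      rw [← Finset.sum_fiberwise_of_maps_to (fun q _ =>
        Finset.mem_union_right _ (Finset.mem_image_of_mem g (Finset.mem_univ q)))
        (fun q => A q * Complex.exp (g q * ξ))]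
      refine Finset.sum_congr rfl fun μ _ => ?_
      rw [Finset.sum_mul]
      refine Finset.sum_congr rfl fun q hq => ?_
      rw [(Finset.mem_filter.mp hq).2]
    calc ∑ μ ∈ T, a μ * Complex.exp (μ * ξ)
        = ∑ μ ∈ T, ((∑ p ∈ univ.filter (fun p => f p = μ), B p) * Complex.exp (μ * ξ)
            - (∑ q ∈ univ.filter (fun q => g q = μ), A q) * Complex.exp (μ * ξ)) := by
          refine Finset.sum_congr rfl fun μ _ => ?_; rw [ha]; ring
      _ = 0 := by rw [Finset.sum_sub_distrib, e1, e2, h ξ, sub_self]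
  by_cases hμ : μ₀ ∈ T
  · have := key μ₀ hμ
    rw [ha] at this
    linear_combination this
  · have h1 : univ.filter (fun p => f p = μ₀) = ∅ := by
      rw [Finset.filter_eq_empty_iff]
      intro p _ hp
      exact hμ (by simp [hT, ← hp])
    have h2 : univ.filter (fun q => g q = μ₀) = ∅ := by
      rw [Finset.filter_eq_empty_iff]
      intro q _ hq
      exact hμ (by simp [hT, ← hq])
    rw [h1, h2]
    simp

noncomputable def Ea (α : ℝ) : ℂ := (Real.cos α : ℂ) + (Real.sin α : ℂ) * Complex.I

noncomputable def Kc (α : ℝ) : ℂ :=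
  (Complex.exp (Complex.I * ((α : ℂ) - (Real.pi : ℂ) / 2) / 2) /
      (Real.sqrt |Real.sin α| : ℂ)) *
    ((Real.pi : ℂ) / ((Real.pi : ℂ) * (1 + Complex.I * ((Real.cos α / Real.sin α : ℝ) : ℂ)))) ^ (1/2 : ℂ)

lemma one_add_I_mul_ne (r : ℝ) : (1 : ℂ) + Complex.I * (r : ℂ) ≠ 0 := by
  intro h
  have := congrArg Complex.re h
  simp at this

lemma Kc_ne_zero (α : ℝ) (hS : Real.sin α ≠ 0) : Kc α ≠ 0 := by
  unfold Kc
  apply mul_ne_zero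
  · apply div_ne_zero (Complex.exp_ne_zero _)
    simp only [ne_eq, ofReal_eq_zero]
    positivity
  · rw [ne_eq, Complex.cpow_eq_zero_iff]
    push_neg
    intro h
    exfalso
    have hpi : (Real.pi : ℂ) ≠ 0 := by simpa using Real.pi_ne_zero
    exact (div_ne_zero hpi (mul_ne_zero hpi (one_add_I_mul_ne _))) h


lemma denom_ne_zero (S C : ℂ) (h1 : C^2+S^2 = 1) : S + I*C ≠ 0 := by
  intro hz
  have h2 : S^2 + C^2 = 0 := by
    have h3 : (S + I*C) * (S - I*C) = 0 := by rw [hz]; ring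
    calc S^2 + C^2 = (S + I*C) * (S - I*C) + C^2*(I^2+1) := by ring
      _ = 0 := by rw [h3, Complex.I_sq]; ring
  rw [add_comm, h1] at h2
  norm_num at h2

lemma key_exponent (pi S C xi s : ℂ) (hS : S ≠ 0) (hpi : pi ≠ 0) (h1 : C^2+S^2 = 1) :
    -pi*I*xi^2*(C/S) + (-pi*s^2 - (2*pi*s - 2*pi*I*xi/S)^2/(4*(-pi*(1+I*(C/S)))))
    = -pi*xi^2 + (-pi*C*(C+S*I)*s^2 + (-2*pi*(C+S*I)*s)*xi) := by
  have hden : S + I*C ≠ 0 := denom_ne_zero S C h1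
  have hbne : (4:ℂ)*(-pi*(1+I*(C/S))) ≠ 0 := by
    have h4 : (4:ℂ)*(-pi*(1+I*(C/S))) = (-4*pi*(S+I*C))/S := by
      field_simp
      try left
      try ring
    rw [h4]
    exact div_ne_zero (mul_ne_zero (mul_ne_zero (by norm_num) hpi) hden) hS
  have e1 : (2*pi*s - 2*pi*I*xi/S)^2/(4*(-pi*(1+I*(C/S))))
      = -(pi*(s*S - I*xi)^2*(S - I*C))/S := by
    rw [div_eq_div_iff hbne hS]
    field_simp
    ring_nf
    have h3 : I^3 = -I := by rw [pow_succ, I_sq]; ring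
    have h4 : I^4 = 1 := by rw [show I^4 = (I^2)^2 by ring, I_sq]; norm_num
    simp only [h3, h4, I_sq]
    linear_combination (8*s*S*I*xi - 4*s^2*S^2 + 4*xi^2) * h1
  rw [e1]
  field_simp
  ring_nf
  have h3 : I^3 = -I := by rw [pow_succ, I_sq]; ring
  simp only [h3, I_sq]
  linear_combination (S*s^2) * h1

lemma hint_exponent (pi S C x y xi : ℂ) (hS : S ≠ 0) :
    -pi*(x-y)^2 + (-pi*I*x^2*(C/S) + -2*pi*I*x*xi/S)
    = (-pi*(1+I*(C/S)))*x^2 + (2*pi*y - 2*pi*I*xi/S)*x + (-pi*y^2) := by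
  field_simp
  ring

lemma frft_gauss_sum (α : ℝ) (hS : Real.sin α ≠ 0) {n : ℕ} (c : Fin n → ℂ) (s : Fin n → ℝ) (ξ : ℝ) :
    frft α (fun t : ℝ => ∑ j, c j * Complex.exp (-(Real.pi : ℂ) * ((t : ℂ) - (s j : ℂ)) ^ 2)) ξ
    = Kc α * Complex.exp (-(Real.pi : ℂ) * (ξ : ℂ) ^ 2) *
      ∑ j, (c j * Complex.exp (-(Real.pi : ℂ) * (Real.cos α : ℂ) * Ea α * (s j : ℂ) ^ 2)) *
        Complex.exp ((-2 * (Real.pi : ℂ) * Ea α * (s j : ℂ)) * (ξ : ℂ)) := by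
  have hC2 : ((Real.cos α : ℂ))^2 + ((Real.sin α : ℂ))^2 = 1 := by
    rw [← Complex.ofReal_pow, ← Complex.ofReal_pow, ← Complex.ofReal_add]
    rw [Real.cos_sq_add_sin_sq]
    norm_num
  have hSc : ((Real.sin α : ℂ)) ≠ 0 := Complex.ofReal_ne_zero.mpr hS
  have hr : ((Real.cos α / Real.sin α : ℝ) : ℂ) = (Real.cos α : ℂ) / (Real.sin α : ℂ) :=
    Complex.ofReal_div _ _
  set C := (Real.cos α : ℂ) with hCdef
  set S := (Real.sin α : ℂ) with hSdef
  set r : ℂ := ((Real.cos α / Real.sin α : ℝ) : ℂ) with hrdef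
  set b : ℂ := -(Real.pi : ℂ) * (1 + Complex.I * r) with hbdef
  have hre : ∀ x : ℝ, ((-(Real.pi:ℂ)) * (1 + Complex.I * (x:ℂ))).re = -Real.pi := by
    intro x; simp [Complex.mul_re]
  have hb : b.re < 0 := by
    have : b.re = -Real.pi := by rw [hbdef, hrdef]; exact hre _
    rw [this]
    simpa using Real.pi_pos
  set cc : Fin n → ℂ := fun j => 2*(Real.pi:ℂ)*(s j : ℂ) - 2*(Real.pi:ℂ)*Complex.I*(ξ:ℂ)/S with hccdef
  set dd : Fin n → ℂ := fun j => -(Real.pi:ℂ)*(s j : ℂ)^2 with hdddef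
  rw [frft, if_neg hS]
  have hint : ∀ t : ℝ,
      (∑ j, c j * Complex.exp (-(Real.pi : ℂ) * ((t : ℂ) - (s j : ℂ)) ^ 2)) *
        Complex.exp (-(Real.pi : ℂ) * Complex.I * (t : ℂ) ^ 2 * r) *
        Complex.exp (-2 * (Real.pi : ℂ) * Complex.I * (t : ℂ) * (ξ : ℂ) / S)
      = ∑ j, c j * Complex.exp (b * (t:ℂ)^2 + cc j * (t:ℂ) + dd j) := by
    intro t
    rw [Finset.sum_mul, Finset.sum_mul]
    refine Finset.sum_congr rfl fun j _ => ?_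
    rw [mul_assoc, mul_assoc, ← Complex.exp_add, ← Complex.exp_add]
    congr 1
    congr 1
    simp only [hccdef, hdddef, hbdef, hr]
    linear_combination hint_exponent (Real.pi : ℂ) S C (t:ℂ) ((s j : ℝ):ℂ) (ξ:ℂ) hSc
  rw [← hrdef, ← hSdef]
  simp_rw [hint]
  rw [integral_finset_sum _ (fun j _ => (integrable_cexp_quadratic' hb (cc j) (dd j)).const_mul (c j))]
  have hKb : ((Real.pi : ℂ) / -b) = (Real.pi : ℂ) / ((Real.pi : ℂ) * (1 + Complex.I * r)) := by
    rw [hbdef]; ring_nf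
  have hint2 : ∀ j : Fin n, ∫ t : ℝ, c j * Complex.exp (b * (t:ℂ)^2 + cc j * (t:ℂ) + dd j)
      = c j * (((Real.pi : ℂ) / ((Real.pi : ℂ) * (1 + Complex.I * r))) ^ (1/2 : ℂ) *
          Complex.exp (dd j - (cc j)^2 / (4*b))) := by
    intro j
    rw [MeasureTheory.integral_const_mul, integral_cexp_quadratic hb, hKb]
  simp_rw [hint2]
  -- now pure algebra
  rw [Kc]
  set ca : ℂ := Complex.exp (Complex.I * ((α : ℂ) - (Real.pi : ℂ) / 2) / 2) /
      (Real.sqrt |Real.sin α| : ℂ) with hcadef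
  set P : ℂ := ((Real.pi : ℂ) / ((Real.pi : ℂ) * (1 + Complex.I * r))) ^ (1/2 : ℂ) with hPdef
  have key : ∀ j : Fin n,
      Complex.exp (-(Real.pi : ℂ) * Complex.I * (ξ:ℂ)^2 * r) * Complex.exp (dd j - (cc j)^2/(4*b))
      = Complex.exp (-(Real.pi : ℂ) * (ξ:ℂ)^2) *
        (Complex.exp (-(Real.pi : ℂ) * C * Ea α * (s j : ℂ)^2) *
         Complex.exp ((-2 * (Real.pi : ℂ) * Ea α * (s j : ℂ)) * (ξ:ℂ))) := by
    intro j
    rw [← Complex.exp_add, ← Complex.exp_add, ← Complex.exp_add]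
    congr 1
    have hpin : ((Real.pi : ℂ)) ≠ 0 := by simpa using Real.pi_ne_zero
    simp only [hccdef, hdddef, hbdef, hr, Ea, ← hCdef, ← hSdef]
    linear_combination key_exponent (Real.pi : ℂ) S C (ξ:ℂ) ((s j : ℝ):ℂ) hSc hpin hC2
  calc ca * Complex.exp (-(Real.pi : ℂ) * Complex.I * (ξ:ℂ)^2 * r) *
        ∑ j, c j * (P * Complex.exp (dd j - (cc j)^2/(4*b)))
      = (ca * P) * ∑ j, c j * (Complex.exp (-(Real.pi : ℂ) * Complex.I * (ξ:ℂ)^2 * r) *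
          Complex.exp (dd j - (cc j)^2/(4*b))) := by
        rw [Finset.mul_sum, Finset.mul_sum]
        refine Finset.sum_congr rfl fun j _ => ?_
        ring
    _ = (ca * P) * ∑ j, c j * (Complex.exp (-(Real.pi : ℂ) * (ξ:ℂ)^2) *
          (Complex.exp (-(Real.pi : ℂ) * C * Ea α * (s j : ℂ)^2) *
           Complex.exp ((-2 * (Real.pi : ℂ) * Ea α * (s j : ℂ)) * (ξ:ℂ)))) := by
        refine congrArg _ (Finset.sum_congr rfl fun j _ => ?_)
        rw [key j]
        
    _ = ca * P * Complex.exp (-(Real.pi : ℂ) * (ξ:ℂ)^2) *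
        ∑ j, (c j * Complex.exp (-(Real.pi : ℂ) * C * Ea α * (s j : ℂ)^2)) *
          Complex.exp ((-2 * (Real.pi : ℂ) * Ea α * (s j : ℂ)) * (ξ:ℂ)) := by
        rw [Finset.mul_sum, Finset.mul_sum]
        refine Finset.sum_congr rfl fun j _ => ?_
        ring



/-- the pair exponent -/
noncomputable def nuC (α : ℝ) (x y : ℝ) : ℂ :=
  -2 * (Real.pi : ℂ) * Ea α * (x : ℂ) + (starRingEnd ℂ) (-2 * (Real.pi : ℂ) * Ea α * (y : ℂ))

lemma nuC_canon (α : ℝ) (x y : ℝ) :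
    nuC α x y = ((-2*Real.pi*Real.cos α*(x+y) : ℝ) : ℂ)
      + ((-2*Real.pi*Real.sin α*(x-y) : ℝ) : ℂ) * Complex.I := by
  unfold nuC Ea
  rw [map_mul, map_mul, map_mul]
  simp only [map_neg, map_ofNat, Complex.conj_ofReal, map_add, map_mul, Complex.conj_I]
  push_cast
  ring

lemma nuC_inj (α : ℝ) (hC : Real.cos α ≠ 0) (hS : Real.sin α ≠ 0) {x y x' y' : ℝ}
    (h : nuC α x y = nuC α x' y') : x = x' ∧ y = y' := by
  rw [nuC_canon, nuC_canon] at h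
  have hre := congrArg Complex.re h
  have him := congrArg Complex.im h
  simp only [Complex.add_re, Complex.ofReal_re, Complex.mul_re, Complex.I_re, Complex.I_im,
    Complex.ofReal_im, Complex.add_im, Complex.mul_im] at hre him
  have hpi := Real.pi_ne_zero
  have h1 : x + y = x' + y' := by
    have hcoef : (-2*Real.pi*Real.cos α) ≠ 0 := by
      simp only [ne_eq, mul_eq_zero]
      push_neg
      exact ⟨⟨by norm_num, hpi⟩, hC⟩
    have : (-2*Real.pi*Real.cos α) * (x+y) = (-2*Real.pi*Real.cos α) * (x'+y') := by
      linarith [hre]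
    exact mul_left_cancel₀ hcoef this
  have h2 : x - y = x' - y' := by
    have hcoef : (-2*Real.pi*Real.sin α) ≠ 0 := by
      simp only [ne_eq, mul_eq_zero]
      push_neg
      exact ⟨⟨by norm_num, hpi⟩, hS⟩
    have : (-2*Real.pi*Real.sin α) * (x-y) = (-2*Real.pi*Real.sin α) * (x'-y') := by
      linarith [him]
    exact mul_left_cancel₀ hcoef this
  constructor <;> linarith

lemma expand_sq {n : ℕ} (d : Fin n → ℂ) (mu : Fin n → ℂ) (ξ : ℝ) :
    (∑ j, d j * Complex.exp (mu j * ξ)) *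
      (starRingEnd ℂ) (∑ j, d j * Complex.exp (mu j * ξ))
    = ∑ q : Fin n × Fin n, (d q.1 * (starRingEnd ℂ) (d q.2)) *
        Complex.exp ((mu q.1 + (starRingEnd ℂ) (mu q.2)) * ξ) := by
  rw [map_sum, Finset.sum_mul_sum, Fintype.sum_prod_type]
  refine Finset.sum_congr rfl fun j _ => Finset.sum_congr rfl fun k _ => ?_
  rw [map_mul, ← Complex.exp_conj, map_mul, Complex.conj_ofReal, add_mul, Complex.exp_add]
  ring

lemma filter_eq_of_inj {γ : Type*} [Fintype γ] [DecidableEq γ] (F : γ → ℂ)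
    (hF : Function.Injective F) (x : γ) :
    Finset.univ.filter (fun p => F p = F x) = {x} := by
  ext p
  simp [hF.eq_iff]

lemma norm_eq_imp_mul_conj {z w : ℂ} (h : ‖z‖ = ‖w‖) :
    z * (starRingEnd ℂ) z = w * (starRingEnd ℂ) w := by
  rw [Complex.mul_conj, Complex.mul_conj, Complex.normSq_eq_norm_sq, Complex.normSq_eq_norm_sq,
    h]

lemma norm_sq_from_mul_conj {z w : ℂ} (h : z * (starRingEnd ℂ) z = w * (starRingEnd ℂ) w) :
    ‖z‖ = ‖w‖ := by
  rw [Complex.mul_conj, Complex.mul_conj] at h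
  have h2 : Complex.normSq z = Complex.normSq w := Complex.ofReal_inj.mp h
  rw [← Real.sqrt_sq (norm_nonneg z),
    ← Real.sqrt_sq (norm_nonneg w), ← Complex.normSq_eq_norm_sq, ← Complex.normSq_eq_norm_sq, h2]

/-- Theorem 5.10: a finite linear combination of shifted Gaussians is determined among
such combinations, up to a unimodular constant, by the modulus of a single fractional
Fourier transform of order α ∉ (π/2)ℤ. -/
theorem phase_retrieval_shifted_gaussians
    (α : ℝ) (hα : ∀ k : ℤ, α ≠ (k : ℝ) * (Real.pi / 2))
    (N M : ℕ) (c : Fin N → ℂ) (κ : Fin M → ℂ) (s : Fin N → ℝ) (τ : Fin M → ℝ)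
    (hs : Function.Injective s) (hτ : Function.Injective τ)
    (hc : ∀ j, c j ≠ 0) (hκ : ∀ j, κ j ≠ 0)
    (u v : ℝ → ℂ)
    (hu : u = fun t : ℝ => ∑ j, c j * Complex.exp (-(Real.pi : ℂ) * ((t : ℂ) - (s j : ℂ)) ^ 2))
    (hv : v = fun t : ℝ => ∑ j, κ j * Complex.exp (-(Real.pi : ℂ) * ((t : ℂ) - (τ j : ℂ)) ^ 2))
    (h : ∀ ξ : ℝ, ‖frft α v ξ‖ = ‖frft α u ξ‖) :
    ∃ (c₀ : ℂ) (e : Fin M ≃ Fin N), ‖c₀‖ = 1 ∧ (∀ j, τ j = s (e j)) ∧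
      (∀ j, κ j = c₀ * c (e j)) ∧ ∀ t : ℝ, v t = c₀ * u t := by
  classical
  -- sin α ≠ 0 and cos α ≠ 0
  have hS : Real.sin α ≠ 0 := by
    intro hz
    obtain ⟨n, hn⟩ := Real.sin_eq_zero_iff.mp hz
    exact hα (2*n) (by rw [← hn]; push_cast; ring)
  have hC : Real.cos α ≠ 0 := by
    intro hz
    obtain ⟨n, hn⟩ := Real.cos_eq_zero_iff.mp hz
    exact hα (2*n+1) (by rw [hn]; push_cast; ring)
  -- weights
  set w : ℝ → ℂ := fun x =>
    Complex.exp (-(Real.pi : ℂ) * (Real.cos α : ℂ) * Ea α * (x : ℂ) ^ 2) with hwdef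
  have hw : ∀ x, w x ≠ 0 := fun x => Complex.exp_ne_zero _
  set d : Fin N → ℂ := fun i => c i * w (s i) with hddef
  set e' : Fin M → ℂ := fun j => κ j * w (τ j) with he'def
  have hd : ∀ i, d i ≠ 0 := fun i => mul_ne_zero (hc i) (hw _)
  have he' : ∀ j, e' j ≠ 0 := fun j => mul_ne_zero (hκ j) (hw _)
  set muu : Fin N → ℂ := fun i => -2 * (Real.pi : ℂ) * Ea α * (s i : ℂ) with hmuudef
  set muv : Fin M → ℂ := fun j => -2 * (Real.pi : ℂ) * Ea α * (τ j : ℂ) with hmuvdef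
  -- norm identity for the exponential sums
  have hnorm : ∀ ξ : ℝ,
      ‖∑ j, e' j * Complex.exp (muv j * ξ)‖ = ‖∑ i, d i * Complex.exp (muu i * ξ)‖ := by
    intro ξ
    have hKv := frft_gauss_sum α hS κ τ ξ
    have hKu := frft_gauss_sum α hS c s ξ
    rw [hu, hv] at h
    have hξ := h ξ
    rw [hKv, hKu] at hξ
    rw [norm_mul, norm_mul, norm_mul, norm_mul] at hξ
    have hKne : ‖Kc α‖ * ‖Complex.exp (-(Real.pi : ℂ) * (ξ:ℂ)^2)‖ ≠ 0 :=
      mul_ne_zero (norm_ne_zero_iff.mpr (Kc_ne_zero α hS)) (norm_ne_zero_iff.mpr (Complex.exp_ne_zero _))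
    exact mul_left_cancel₀ hKne hξ
  -- product identity
  have hprod : ∀ ξ : ℝ,
      ∑ p : Fin M × Fin M, (e' p.1 * (starRingEnd ℂ) (e' p.2)) *
        Complex.exp ((nuC α (τ p.1) (τ p.2)) * ξ)
      = ∑ q : Fin N × Fin N, (d q.1 * (starRingEnd ℂ) (d q.2)) *
        Complex.exp ((nuC α (s q.1) (s q.2)) * ξ) := by
    intro ξ
    have h1 := norm_eq_imp_mul_conj (hnorm ξ)
    rw [expand_sq, expand_sq] at h1
    exact h1
  -- matching coefficients
  have hmatch := expsum_match (fun p : Fin M × Fin M => nuC α (τ p.1) (τ p.2))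
    (fun q : Fin N × Fin N => nuC α (s q.1) (s q.2))
    (fun p => e' p.1 * (starRingEnd ℂ) (e' p.2))
    (fun q => d q.1 * (starRingEnd ℂ) (d q.2)) hprod
  -- injectivity of the exponent maps
  have hinjv : Function.Injective (fun p : Fin M × Fin M => nuC α (τ p.1) (τ p.2)) := by
    intro p q hpq
    obtain ⟨h1, h2⟩ := nuC_inj α hC hS hpq
    exact Prod.ext (hτ h1) (hτ h2)
  have hinju : Function.Injective (fun q : Fin N × Fin N => nuC α (s q.1) (s q.2)) := by
    intro p q hpq
    obtain ⟨h1, h2⟩ := nuC_inj α hC hS hpq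
    exact Prod.ext (hs h1) (hs h2)
  have hconj_ne : ∀ z : ℂ, z ≠ 0 → (starRingEnd ℂ) z ≠ 0 := by
    intro z hz
    simpa using hz
  -- construction of φ : every τ j is some s i
  have hexφ : ∀ j : Fin M, ∃ i : Fin N, s i = τ j := by
    intro j
    by_contra hcon
    push_neg at hcon
    have hmj := hmatch (nuC α (τ j) (τ j))
    have hfil : Finset.univ.filter
        (fun q : Fin N × Fin N => nuC α (s q.1) (s q.2) = nuC α (τ j) (τ j)) = ∅ := by
      rw [Finset.filter_eq_empty_iff]
      intro q _ hq
      exact hcon q.1 (nuC_inj α hC hS hq).1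
    rw [hfil] at hmj
    have hfil2 := filter_eq_of_inj _ hinjv (j, j)
    rw [hfil2] at hmj
    simp only [Finset.sum_singleton, Finset.sum_empty] at hmj
    exact mul_ne_zero (he' j) (hconj_ne _ (he' j)) hmj
  choose φ hφ using hexφ
  -- construction of ψ : every s i is some τ j
  have hexψ : ∀ i : Fin N, ∃ j : Fin M, τ j = s i := by
    intro i
    by_contra hcon
    push_neg at hcon
    have hmi := hmatch (nuC α (s i) (s i))
    have hfil : Finset.univ.filter
        (fun p : Fin M × Fin M => nuC α (τ p.1) (τ p.2) = nuC α (s i) (s i)) = ∅ := by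
      rw [Finset.filter_eq_empty_iff]
      intro p _ hp
      exact hcon p.1 (nuC_inj α hC hS hp).1
    rw [hfil] at hmi
    have hfil2 := filter_eq_of_inj _ hinju (i, i)
    rw [hfil2] at hmi
    simp only [Finset.sum_singleton, Finset.sum_empty] at hmi
    exact mul_ne_zero (hd i) (hconj_ne _ (hd i)) hmi.symm
  choose ψ hψ using hexψ
  -- e : Fin M ≃ Fin N
  have hleft : ∀ j, ψ (φ j) = j := fun j => hτ (by rw [hψ, hφ])
  have hright : ∀ i, φ (ψ i) = i := fun i => hs (by rw [hφ, hψ])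
  set eqv : Fin M ≃ Fin N := ⟨φ, ψ, hleft, hright⟩ with heqvdef
  -- coefficient matching for all pairs
  have hpair : ∀ p : Fin M × Fin M,
      e' p.1 * (starRingEnd ℂ) (e' p.2) = d (φ p.1) * (starRingEnd ℂ) (d (φ p.2)) := by
    intro p
    have hmp := hmatch (nuC α (τ p.1) (τ p.2))
    rw [filter_eq_of_inj _ hinjv p, Finset.sum_singleton] at hmp
    have hval : nuC α (τ p.1) (τ p.2) = nuC α (s (φ p.1)) (s (φ p.2)) := by
      rw [hφ, hφ]
    have hfil : Finset.univ.filter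
        (fun q : Fin N × Fin N => nuC α (s q.1) (s q.2) = nuC α (τ p.1) (τ p.2))
        = {(φ p.1, φ p.2)} := by
      rw [hval]
      exact filter_eq_of_inj _ hinju (φ p.1, φ p.2)
    rw [hfil, Finset.sum_singleton] at hmp
    exact hmp
  -- translate to κ/c relations
  have hκc : ∀ j k : Fin M, κ j * (starRingEnd ℂ) (κ k) = c (φ j) * (starRingEnd ℂ) (c (φ k)) := by
    intro j k
    have hp := hpair (j, k)
    simp only [he'def, hddef] at hp
    rw [← hφ j, ← hφ k] at hp
    have hw2 : w (s (φ j)) * (starRingEnd ℂ) (w (s (φ k))) ≠ 0 :=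
      mul_ne_zero (hw _) (hconj_ne _ (hw _))
    apply mul_right_cancel₀ hw2
    calc κ j * (starRingEnd ℂ) (κ k) * (w (s (φ j)) * (starRingEnd ℂ) (w (s (φ k))))
        = κ j * w (s (φ j)) * (starRingEnd ℂ) (κ k * w (s (φ k))) := by
          rw [map_mul]; ring
      _ = c (φ j) * w (s (φ j)) * (starRingEnd ℂ) (c (φ k) * w (s (φ k))) := hp
      _ = c (φ j) * (starRingEnd ℂ) (c (φ k)) * (w (s (φ j)) * (starRingEnd ℂ) (w (s (φ k)))) := by
          rw [map_mul]; ring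
  -- case M = 0
  rcases Nat.eq_zero_or_pos M with hM | hM
  · subst hM
    refine ⟨1, eqv, by simp, fun j => j.elim0, fun j => j.elim0, fun t => ?_⟩
    have hN : IsEmpty (Fin N) := ⟨fun i => (ψ i).elim0⟩
    rw [hu, hv]
    simp [Finset.univ_eq_empty]
  · -- main case
    set j₀ : Fin M := ⟨0, hM⟩ with hj₀
    set c₀ : ℂ := κ j₀ / c (φ j₀) with hc₀def
    have hcφ : c (φ j₀) ≠ 0 := hc _
    have hnormc₀ : ‖c₀‖ = 1 := by
      have h2 := hκc j₀ j₀
      have hnn : ‖κ j₀‖ = ‖c (φ j₀)‖ := by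
        rw [Complex.mul_conj, Complex.mul_conj] at h2
        have h3 : Complex.normSq (κ j₀) = Complex.normSq (c (φ j₀)) := Complex.ofReal_inj.mp h2
        have h4 : ‖κ j₀‖ ^ 2 = ‖c (φ j₀)‖ ^ 2 := by
          rw [← Complex.normSq_eq_norm_sq, ← Complex.normSq_eq_norm_sq, h3]
        exact (pow_left_inj₀ (norm_nonneg _) (norm_nonneg _) two_ne_zero).mp h4
      rw [hc₀def, norm_div, hnn, div_self (norm_ne_zero_iff.mpr hcφ)]
    have hκeq : ∀ j, κ j = c₀ * c (φ j) := by
      intro j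
      have h1 := hκc j j₀
      have h2 := hκc j₀ j₀
      have hcc : κ j * c (φ j₀) = κ j₀ * c (φ j) := by
        apply mul_right_cancel₀ (hconj_ne _ hcφ)
        calc κ j * c (φ j₀) * (starRingEnd ℂ) (c (φ j₀))
            = κ j * (c (φ j₀) * (starRingEnd ℂ) (c (φ j₀))) := by ring
          _ = κ j * (κ j₀ * (starRingEnd ℂ) (κ j₀)) := by rw [← h2]
          _ = κ j₀ * (κ j * (starRingEnd ℂ) (κ j₀)) := by ring
          _ = κ j₀ * (c (φ j) * (starRingEnd ℂ) (c (φ j₀))) := by rw [h1]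
          _ = κ j₀ * c (φ j) * (starRingEnd ℂ) (c (φ j₀)) := by ring
      rw [hc₀def, div_mul_eq_mul_div, eq_div_iff hcφ]
      linear_combination hcc
    refine ⟨c₀, eqv, hnormc₀, fun j => (hφ j).symm, fun j => hκeq j, fun t => ?_⟩
    rw [hu, hv]
    calc ∑ j, κ j * Complex.exp (-(Real.pi : ℂ) * ((t : ℂ) - (τ j : ℂ)) ^ 2)
        = ∑ j, c₀ * (c (φ j) * Complex.exp (-(Real.pi : ℂ) * ((t : ℂ) - (s (φ j) : ℂ)) ^ 2)) := by
          refine Finset.sum_congr rfl fun j _ => ?_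
          rw [hκeq j, hφ j]
          ring
      _ = c₀ * ∑ j, c (eqv j) * Complex.exp (-(Real.pi : ℂ) * ((t : ℂ) - (s (eqv j) : ℂ)) ^ 2) := by
          rw [Finset.mul_sum]
          rfl
      _ = c₀ * ∑ i, c i * Complex.exp (-(Real.pi : ℂ) * ((t : ℂ) - (s i : ℂ)) ^ 2) := by
          rw [Equiv.sum_comp eqv (fun i => c i * Complex.exp (-(Real.pi : ℂ) * ((t : ℂ) - (s i : ℂ)) ^ 2))]
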